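/- Let D ⊆ ℂ be open, z₀ ∈ D, and f : D \ {z₀} → ℂ a holomorphic function satisfying P(z, f(z)) = 0 for all z ∈ D \ {z₀}, where P ∈ ℂ[X,Y] is nonzero. Then there exists an integer k ≥ 0 such that the function z ↦ (z − z₀)^k f(z) is bounded on some punctured neighborhood of z₀; in particular z₀ is a removable singularity or a pole of f, not an essential singularity. -/

import Mathlib

open Polynomial

/-- The bivariate polynomial ring hom: variable 0 ↦ inner X, variable 1 ↦ outer X. -/
noncomputable def toBiv : MvPolynomial (Fin 2) ℂ →+* Polynomial (Polynomial ℂ) :=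
  MvPolynomial.eval₂Hom ((Polynomial.C : Polynomial ℂ →+* Polynomial (Polynomial ℂ)).comp
    (Polynomial.C : ℂ →+* Polynomial ℂ)) ![Polynomial.C Polynomial.X, Polynomial.X]

noncomputable def fromBiv : Polynomial (Polynomial ℂ) →+* MvPolynomial (Fin 2) ℂ :=
  Polynomial.eval₂RingHom
    (Polynomial.eval₂RingHom (MvPolynomial.C : ℂ →+* MvPolynomial (Fin 2) ℂ)
      (MvPolynomial.X 0)) (MvPolynomial.X 1)

lemma fromBiv_toBiv (P : MvPolynomial (Fin 2) ℂ) : fromBiv (toBiv P) = P := by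
  have : fromBiv.comp toBiv = RingHom.id _ := by
    apply MvPolynomial.ringHom_ext
    · intro r
      simp [toBiv, fromBiv]
    · intro i
      fin_cases i <;> simp [toBiv, fromBiv]
  calc fromBiv (toBiv P) = (fromBiv.comp toBiv) P := rfl
  _ = P := by rw [this]; rfl

lemma toBiv_eval (P : MvPolynomial (Fin 2) ℂ) (z w : ℂ) :
    Polynomial.eval₂ (Polynomial.evalRingHom z) w (toBiv P) = MvPolynomial.eval ![z, w] P := by
  have : (Polynomial.eval₂RingHom (Polynomial.evalRingHom z) w).comp toBiv
      = (MvPolynomial.eval ![z, w] : MvPolynomial (Fin 2) ℂ →+* ℂ) := by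
    apply MvPolynomial.ringHom_ext
    · intro r; simp [toBiv]
    · intro i; fin_cases i <;> simp [toBiv]
  calc Polynomial.eval₂ (Polynomial.evalRingHom z) w (toBiv P)
      = ((Polynomial.eval₂RingHom (Polynomial.evalRingHom z) w).comp toBiv) P := rfl
  _ = MvPolynomial.eval ![z, w] P := by rw [this]

lemma key_ineq (k : ℕ) (a : ℕ → ℂ) (w : ℂ) (B : ℝ)
    (hB : ∑ i ∈ Finset.range (k + 2), norm (a i) ≤ B)
    (hsum : ∑ i ∈ Finset.range (k + 2), a i * w ^ i = 0) :
    norm (a (k + 1) * w) ≤ B := by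
  have habs_nonneg : ∀ i ∈ Finset.range (k + 2), (0:ℝ) ≤ norm (a i) :=
    fun i _ => norm_nonneg _
  rcases le_or_gt (norm w) 1 with hw | hw
  · have h1 : norm (a (k+1)) ≤ B := by
      refine le_trans ?_ hB
      exact Finset.single_le_sum habs_nonneg (by simp)
    calc norm (a (k+1) * w) = norm (a (k+1)) * norm w := norm_mul _ _
    _ ≤ norm (a (k+1)) * 1 := by
        exact mul_le_mul_of_nonneg_left hw (norm_nonneg _)
    _ ≤ B := by rwa [mul_one]
  · have hw0 : (0:ℝ) < norm w := lt_trans one_pos hw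
    have h1 : a (k+1) * w ^ (k+1) = -∑ i ∈ Finset.range (k+1), a i * w ^ i := by
      rw [Finset.sum_range_succ] at hsum
      exact eq_neg_of_add_eq_zero_right hsum
    have h2 : norm (a (k+1)) * norm w ^ (k+1)
        ≤ (∑ i ∈ Finset.range (k+1), norm (a i)) * norm w ^ k := by
      calc norm (a (k+1)) * norm w ^ (k+1)
          = norm (a (k+1) * w ^ (k+1)) := by rw [norm_mul, norm_pow]
      _ = norm (∑ i ∈ Finset.range (k+1), a i * w ^ i) := by rw [h1, norm_neg]
      _ ≤ ∑ i ∈ Finset.range (k+1), norm (a i * w ^ i) :=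
          norm_sum_le _ _
      _ ≤ ∑ i ∈ Finset.range (k+1), norm (a i) * norm w ^ k := by
          refine Finset.sum_le_sum fun i hi => ?_
          rw [norm_mul, norm_pow]
          refine mul_le_mul_of_nonneg_left ?_ (norm_nonneg _)
          exact pow_le_pow_right₀ (le_of_lt hw) (Nat.lt_succ_iff.mp (Finset.mem_range.mp hi))
      _ = (∑ i ∈ Finset.range (k+1), norm (a i)) * norm w ^ k := by
          rw [Finset.sum_mul]
    have h3 : (∑ i ∈ Finset.range (k+1), norm (a i)) ≤ B := by
      refine le_trans ?_ hB
      exact Finset.sum_le_sum_of_subset_of_nonneg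
        (Finset.range_subset_range.mpr (by omega)) (fun i hi _ => norm_nonneg _)
    have h4 : norm (a (k+1)) * norm w * norm w ^ k
        ≤ B * norm w ^ k := by
      calc norm (a (k+1)) * norm w * norm w ^ k
          = norm (a (k+1)) * norm w ^ (k+1) := by ring
      _ ≤ (∑ i ∈ Finset.range (k+1), norm (a i)) * norm w ^ k := h2
      _ ≤ B * norm w ^ k :=
          mul_le_mul_of_nonneg_right h3 (le_of_lt (pow_pos hw0 k))
    have := le_of_mul_le_mul_right h4 (pow_pos hw0 k)
    rwa [norm_mul]

/-- **Singularities of complex Nash functions.** If `f` is holomorphic on `D \ {z₀}` and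
satisfies a nonzero polynomial identity `P(z, f z) = 0` there, then for some `k ≥ 0` the
function `z ↦ (z - z₀)^k * f z` is bounded on a punctured neighbourhood of `z₀`; hence `z₀`
is a removable singularity or a pole, not an essential singularity. -/
theorem stmt_3 (D : Set ℂ) (hopen : IsOpen D) (z₀ : ℂ) (hz₀ : z₀ ∈ D)
    (f : ℂ → ℂ) (hf : DifferentiableOn ℂ f (D \ {z₀}))
    (P : MvPolynomial (Fin 2) ℂ) (hP : P ≠ 0)
    (hPf : ∀ z ∈ D \ {z₀}, MvPolynomial.eval ![z, f z] P = 0) :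
    ∃ k : ℕ, ∃ U ∈ nhds z₀, ∃ C : ℝ,
      ∀ z ∈ U, z ≠ z₀ → ‖(z - z₀) ^ k * f z‖ ≤ C := by
  classical
  set Q : Polynomial (Polynomial ℂ) := toBiv P with hQdef
  have hQ0 : Q ≠ 0 := by
    intro h
    apply hP
    rw [← fromBiv_toBiv P, ← hQdef, h, map_zero]
  have heval : ∀ z ∈ D \ {z₀},
      ∑ i ∈ Finset.range (Q.natDegree + 1), (Q.coeff i).eval z * f z ^ i = 0 := by
    intro z hz
    have h1 := toBiv_eval P z (f z)
    rw [hPf z hz] at h1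
    rw [Polynomial.eval₂_eq_sum_range] at h1
    simpa using h1
  have hDinf : (D \ {z₀}).Infinite := by
    have : (D : Set ℂ).Infinite := infinite_of_mem_nhds z₀ (hopen.mem_nhds hz₀)
    exact this.diff (Set.finite_singleton z₀)
  set n := Q.natDegree with hn
  rcases Nat.eq_zero_or_pos n with hn0 | hnpos
  · -- degree 0 in f: contradiction
    exfalso
    obtain ⟨a, ha⟩ := Polynomial.natDegree_eq_zero.mp hn0
    have ha0 : a ≠ 0 := by
      intro h; apply hQ0; rw [← ha, h, map_zero]
    have : ∀ z ∈ D \ {z₀}, a.eval z = 0 := by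
      intro z hz
      have := heval z hz
      rw [hn0] at this
      simpa [← ha] using this
    apply ha0
    apply Polynomial.eq_zero_of_infinite_isRoot
    exact hDinf.mono fun z hz => this z hz
  · obtain ⟨k, hk⟩ : ∃ k, n = k + 1 := ⟨n - 1, (Nat.succ_pred_eq_of_pos hnpos).symm⟩
    set p : Polynomial ℂ := Q.coeff n with hpdef
    have hp0 : p ≠ 0 := by
      have : Q.leadingCoeff ≠ 0 := Polynomial.leadingCoeff_ne_zero.mpr hQ0
      exact this
    set m := p.rootMultiplicity z₀ with hm
    set g : Polynomial ℂ := p /ₘ (X - Polynomial.C z₀) ^ m with hg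
    have hfactor : (X - Polynomial.C z₀) ^ m * g = p :=
      Polynomial.pow_mul_divByMonic_rootMultiplicity_eq p z₀
    have hg0 : g.eval z₀ ≠ 0 :=
      Polynomial.eval_divByMonic_pow_rootMultiplicity_ne_zero z₀ hp0
    set c : ℝ := norm (g.eval z₀) with hc
    have hcpos : 0 < c := by
      simpa [hc] using (norm_pos_iff.mpr hg0)
    -- choose a radius where |g.eval z| > c/2 and closedBall ⊆ D
    have hcont : Continuous fun z => norm (g.eval z) :=
      continuous_norm.comp (Polynomial.continuous g)
    have hV : IsOpen {z : ℂ | c / 2 < norm (g.eval z)} :=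
      isOpen_lt continuous_const hcont
    have hz₀V : z₀ ∈ {z : ℂ | c / 2 < norm (g.eval z)} := by
      simp only [Set.mem_setOf_eq, ← hc]
      linarith
    obtain ⟨r, hrpos, hrball⟩ := Metric.isOpen_iff.mp (hV.inter hopen) z₀ ⟨hz₀V, hz₀⟩
    -- bound for the coefficients on the closed ball
    have hcontsum : ContinuousOn
        (fun z => ∑ i ∈ Finset.range (n + 1), norm ((Q.coeff i).eval z))
        (Metric.closedBall z₀ (r / 2)) := by
      apply Continuous.continuousOn
      exact continuous_finset_sum _ fun i _ =>
        continuous_norm.comp (Polynomial.continuous _)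
    obtain ⟨B, hB⟩ := (isCompact_closedBall z₀ (r / 2)).exists_bound_of_continuousOn hcontsum
    have hBbound : ∀ z ∈ Metric.closedBall z₀ (r / 2),
        ∑ i ∈ Finset.range (n + 1), norm ((Q.coeff i).eval z) ≤ B := by
      intro z hz
      have := hB z hz
      calc ∑ i ∈ Finset.range (n + 1), norm ((Q.coeff i).eval z)
          ≤ ‖∑ i ∈ Finset.range (n + 1), norm ((Q.coeff i).eval z)‖ :=
            le_abs_self _
      _ ≤ B := this
    refine ⟨m, Metric.ball z₀ (r / 2), Metric.ball_mem_nhds z₀ (by positivity), B / (c / 2), ?_⟩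
    intro z hzball hzne
    have hzD : z ∈ D := hrball (Metric.ball_subset_ball (by linarith) hzball) |>.2
    have hzg : c / 2 < norm (g.eval z) :=
      (hrball (Metric.ball_subset_ball (by linarith) hzball)).1
    have hzmem : z ∈ D \ {z₀} := ⟨hzD, hzne⟩
    -- key inequality
    have hkey : norm (p.eval z * f z) ≤ B := by
      have hsum := heval z hzmem
      rw [hk] at hsum
      have hBz : ∑ i ∈ Finset.range (k + 2), norm ((Q.coeff i).eval z) ≤ B := by
        have := hBbound z (Metric.ball_subset_closedBall hzball)
        rwa [hk] at this
      have := key_ineq k (fun i => (Q.coeff i).eval z) (f z) B hBz hsum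
      rwa [← hk] at this
    -- conclude
    have hgz : g.eval z ≠ 0 := by
      intro h; rw [h] at hzg; simp at hzg; linarith
    have hrewrite : (z - z₀) ^ m * f z = p.eval z * f z / g.eval z := by
      have hpz : p.eval z = (z - z₀) ^ m * g.eval z := by
        conv_lhs => rw [← hfactor]
        simp [Polynomial.eval_pow]
      rw [hpz]
      field_simp
    rw [hrewrite, norm_div]
    rw [div_le_div_iff₀ (norm_pos_iff.mpr hgz) (by linarith)]
    calc norm (p.eval z * f z) * (c / 2) ≤ B * (c / 2) :=
        mul_le_mul_of_nonneg_right hkey (by linarith)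
    _ ≤ B * norm (g.eval z) := by
        have hBnonneg : 0 ≤ B := by
          have := hBbound z₀ (Metric.mem_closedBall_self (by positivity))
          refine le_trans ?_ this
          exact Finset.sum_nonneg fun i _ => norm_nonneg _
        exact mul_le_mul_of_nonneg_left (le_of_lt hzg) hBnonneg
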